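/- If a finite rule set R is pieceful and bounded, then for every instance I, the size of every piece of chase_∞(I,R) (with respect to nulls) is bounded by a constant depending only on R, not on I. -/

import Mathlib

open scoped Classical
noncomputable section

namespace ER

/-- Terms: constants or variables (variables occurring in instances are called nulls). -/
inductive Term where
  | const : ℕ → Term
  | var : ℕ → Term
deriving DecidableEq

def Term.isConst : Term → Prop
  | .const _ => True
  | .var _ => False

/-- An atom `p(t₁,…,tₙ)`. -/
structure Atom where
  pred : ℕ
  args : List Term
deriving DecidableEq

def Atom.terms (a : Atom) : Set Term := {t | t ∈ a.args}
def Atom.vars (a : Atom) : Set ℕ := {v | Term.var v ∈ a.args}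

def termsOf (S : Set Atom) : Set Term := ⋃ a ∈ S, a.terms
def varsOf (S : Set Atom) : Set ℕ := ⋃ a ∈ S, a.vars
/-- The nulls (non-constant terms) occurring in a set of atoms. -/
def nullsOf (S : Set Atom) : Set Term := {t | t ∈ termsOf S ∧ ¬ t.isConst}

def Term.subst (σ : ℕ → Term) : Term → Term
  | .const c => .const c
  | .var v => σ v

def Atom.subst (σ : ℕ → Term) (a : Atom) : Atom := ⟨a.pred, a.args.map (Term.subst σ)⟩
def substSet (σ : ℕ → Term) (S : Set Atom) : Set Atom := (Atom.subst σ) '' S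

/-- A homomorphism from `S1` to `S2`: a substitution of variables by terms mapping `S1` into `S2`. -/
def isHom (σ : ℕ → Term) (S1 S2 : Set Atom) : Prop := substSet σ S1 ⊆ S2

/-- An injective homomorphism (injective on the terms of the source). -/
def isInjHom (σ : ℕ → Term) (S1 S2 : Set Atom) : Prop :=
  isHom σ S1 S2 ∧ Set.InjOn (Term.subst σ) (termsOf S1)

/-- An instance is a finite set of ground atoms. -/
def IsInstance (I : Set Atom) : Prop := I.Finite ∧ ∀ t ∈ termsOf I, t.isConst

/-- An existential rule, given by its body and head. -/
structure Rule where
  body : Set Atom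
  head : Set Atom

def Rule.frontier (R : Rule) : Set ℕ := varsOf R.body ∩ varsOf R.head
def Rule.exist (R : Rule) : Set ℕ := varsOf R.head \ varsOf R.body

/-- Well-formed rule: finite non-empty body and head, no constants. -/
def WfRule (R : Rule) : Prop :=
  R.body.Finite ∧ R.head.Finite ∧ R.body.Nonempty ∧ R.head.Nonempty ∧
  ∀ t ∈ termsOf (R.body ∪ R.head), ¬ t.isConst

def WfList (L : List Rule) : Prop := ∀ R ∈ L, WfRule R

/-- Restriction of a substitution to a set of variables (default value elsewhere). -/
def restrict (f : ℕ → Term) (F : Set ℕ) : ℕ → Term :=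
  fun v => if v ∈ F then f v else Term.const 0

/-- A semi-oblivious naming of nulls for the rules of `L`: the null created for an
existential variable depends only on the rule and the restriction of the trigger to the
frontier, and distinct such data yield distinct nulls. -/
def SONaming (L : List Rule) (ν : Rule → (ℕ → Term) → ℕ → ℕ) : Prop :=
  (∀ R ∈ L, ∀ f g : ℕ → Term,
      restrict f R.frontier = restrict g R.frontier → ν R f = ν R g) ∧
  (∀ R ∈ L, ∀ R' ∈ L, ∀ f f' x x', ν R f x = ν R' f' x' →
      R = R' ∧ restrict f R.frontier = restrict f' R'.frontier ∧ x = x')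

/-- The safe extension of a trigger `π`, replacing each existential variable by its null. -/
def safeSub (ν : Rule → (ℕ → Term) → ℕ → ℕ) (R : Rule) (π : ℕ → Term) : ℕ → Term :=
  fun y => if y ∈ R.exist then Term.var (ν R (restrict π R.frontier) y) else π y

/-- One breadth-first semi-oblivious chase step. -/
def chaseStep (ν : Rule → (ℕ → Term) → ℕ → ℕ) (L : List Rule) (S : Set Atom) : Set Atom :=
  S ∪ {a | ∃ R ∈ L, ∃ π : ℕ → Term, isHom π R.body S ∧ a ∈ substSet (safeSub ν R π) R.head}

/-- The breadth-first semi-oblivious chase. -/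
def chaseF (ν : Rule → (ℕ → Term) → ℕ → ℕ) (L : List Rule) (I : Set Atom) : ℕ → Set Atom
  | 0 => I
  | k + 1 => chaseStep ν L (chaseF ν L I k)

def chaseInf (ν : Rule → (ℕ → Term) → ℕ → ℕ) (L : List Rule) (I : Set Atom) : Set Atom :=
  ⋃ k, chaseF ν L I k

/-- `L'` parallelises `L`. -/
def Parallelises (L' L : List Rule) : Prop :=
  ∀ ν ν', SONaming L ν → SONaming L' ν' → ∀ I, IsInstance I →
    (∃ σ, isInjHom σ (chaseInf ν L I) (chaseF ν' L' I 1)) ∧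
    (∃ σ, isHom σ (chaseF ν' L' I 1) (chaseInf ν L I))

def Parallelisable (L : List Rule) : Prop := ∃ L', WfList L' ∧ Parallelises L' L

/-- Boundedness of the semi-oblivious chase, uniformly over all instances. -/
def Bounded (L : List Rule) : Prop :=
  ∃ k, ∀ ν, SONaming L ν → ∀ I, IsInstance I → chaseF ν L I k = chaseInf ν L I

def ChaseFinite (L : List Rule) : Prop :=
  ∀ ν, SONaming L ν → ∀ I, IsInstance I → ∃ k, chaseF ν L I k = chaseInf ν L I

/-- Two atoms are `T`-linked if they share a term of `T`. -/
def linked (T : Set Term) (a b : Atom) : Prop := ∃ t ∈ T, t ∈ a.terms ∧ t ∈ b.terms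

/-- Connectivity in `S` by a path of atoms where consecutive atoms share a term of `T`. -/
def connectedIn (S : Set Atom) (T : Set Term) (a b : Atom) : Prop :=
  a ∈ S ∧ b ∈ S ∧ Relation.ReflTransGen (fun x y => x ∈ S ∧ y ∈ S ∧ linked T x y) a b

/-- `P` is closed in `S` w.r.t. `T`-linkedness. -/
def closedIn (S : Set Atom) (T : Set Term) (P : Set Atom) : Prop :=
  ∀ a ∈ S, ∀ b ∈ P, linked T a b → a ∈ P

/-- A piece of `S` w.r.t. `T`: a non-empty subset closed under `T`-linkedness and minimal such. -/
def IsPiece (S : Set Atom) (T : Set Term) (P : Set Atom) : Prop :=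
  P.Nonempty ∧ P ⊆ S ∧ closedIn S T P ∧
  ∀ P', P' ⊆ P → P'.Nonempty → closedIn S T P' → P' = P

/-- A single-piece rule: its head is a piece of itself w.r.t. its existential variables. -/
def SinglePiece (R : Rule) : Prop := IsPiece R.head (Term.var '' R.exist) R.head

/-- The rule used at step `k` of a derivation. -/
def ruleAt (L : List Rule) (r : ℕ → ℕ) (k : ℕ) : Rule := L.getD (r k) ⟨∅, ∅⟩

/-- The set of atoms produced by the `k`-th rule application of a derivation. -/
def producedAt (ν : Rule → (ℕ → Term) → ℕ → ℕ) (L : List Rule) (r : ℕ → ℕ)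
    (π : ℕ → ℕ → Term) (k : ℕ) : Set Atom :=
  substSet (safeSub ν (ruleAt L r k) (π k)) (ruleAt L r k).head

def derivState (ν : Rule → (ℕ → Term) → ℕ → ℕ) (L : List Rule) (I : Set Atom)
    (r : ℕ → ℕ) (π : ℕ → ℕ → Term) : ℕ → Set Atom
  | 0 => I
  | k + 1 => derivState ν L I r π k ∪ producedAt ν L r π k

/-- An `R`-derivation of length `n` from `I`: each step applies a trigger. -/
def IsDeriv (ν : Rule → (ℕ → Term) → ℕ → ℕ) (L : List Rule) (I : Set Atom) (n : ℕ)
    (r : ℕ → ℕ) (π : ℕ → ℕ → Term) : Prop :=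
  ∀ k < n, r k < L.length ∧ isHom (π k) (ruleAt L r k).body (derivState ν L I r π k)

/-- A pieceful derivation: each trigger maps its rule's frontier entirely into the terms of
the initial instance, or entirely into the terms produced by a single earlier application. -/
def PiecefulDeriv (ν : Rule → (ℕ → Term) → ℕ → ℕ) (L : List Rule) (I : Set Atom) (n : ℕ)
    (r : ℕ → ℕ) (π : ℕ → ℕ → Term) : Prop :=
  ∀ k < n, (∀ x ∈ (ruleAt L r k).frontier, π k x ∈ termsOf I) ∨
    ∃ j < k, ∀ x ∈ (ruleAt L r k).frontier, π k x ∈ termsOf (producedAt ν L r π j)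

/-- A pieceful rule set: every derivation from every instance is pieceful. -/
def PiecefulSet (L : List Rule) : Prop :=
  ∀ ν, SONaming L ν → ∀ I, IsInstance I → ∀ n r π,
    IsDeriv ν L I n r π → PiecefulDeriv ν L I n r π

/-- First-order structures for the semantics of rules. -/
structure Struct where
  D : Type
  nonempty : Nonempty D
  interp : ℕ → List D → Prop
  cinterp : ℕ → D

def evalT (M : Struct) (v : ℕ → M.D) : Term → M.D
  | .const c => M.cinterp c
  | .var x => v x

def holdsA (M : Struct) (v : ℕ → M.D) (a : Atom) : Prop :=
  M.interp a.pred (a.args.map (evalT M v))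

/-- Satisfaction of (the universal-existential closure of) a rule in a structure. -/
def satRule (M : Struct) (R : Rule) : Prop :=
  ∀ v : ℕ → M.D, (∀ a ∈ R.body, holdsA M v a) →
    ∃ w : ℕ → M.D, (∀ x ∈ varsOf R.body, w x = v x) ∧ ∀ a ∈ R.head, holdsA M w a

/-- Separating variables of `S' ⊆ S`: variables occurring both in `S'` and in `S \ S'`. -/
def sepVars (S' S : Set Atom) : Set ℕ := varsOf S' ∩ varsOf (S \ S')

/-- A piece-unifier `(S', H', u)` of a set of atoms `S` with a rule `R`. -/
def IsPieceUnifier (S : Set Atom) (R : Rule) (S' H' : Set Atom) (u : ℕ → Term) : Prop :=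
  Disjoint (varsOf S) (varsOf (R.body ∪ R.head)) ∧
  S'.Nonempty ∧ S' ⊆ S ∧ H' ⊆ R.head ∧
  (∀ x, x ∉ R.frontier ∪ varsOf S' → u x = Term.var x) ∧
  (∀ x ∈ R.frontier ∪ varsOf S', ∃ y ∈ varsOf R.head, u x = Term.var y) ∧
  (∀ x ∈ R.frontier, ∃ y ∈ R.frontier, u x = Term.var y) ∧
  (∀ x ∈ sepVars S' S, ∃ y ∈ R.frontier, u x = Term.var y) ∧
  substSet u S' = substSet u H'

/-- The existential stability property of a piece-unifier of `body R2` with `R1`. -/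
def StableUnifier (R2 R1 : Rule) (B2' : Set Atom) (u : ℕ → Term) : Prop :=
  (∀ x ∈ R2.frontier, u x ∉ Term.var '' R1.exist) ∨ R2.frontier ⊆ varsOf B2'

/-- The existential composition `R2 ∘_μ R1` w.r.t. a piece-unifier `μ = (B2', H1', u)`
of `body R2` with `R1`. -/
def compose (R2 R1 : Rule) (B2' : Set Atom) (u : ℕ → Term) : Rule :=
  if ∀ x ∈ R2.frontier, u x ∉ Term.var '' R1.exist then
    ⟨substSet u R1.body ∪ substSet u (R2.body \ B2'), substSet u R2.head⟩
  else
    ⟨substSet u R1.body ∪ substSet u (R2.body \ B2'),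
     substSet u R1.head ∪ substSet u R2.head⟩

/-- The closure `R*` of a rule set under existential composition. -/
inductive InClosure (𝒮 : Set Rule) : Rule → Prop
  | base {R : Rule} : R ∈ 𝒮 → InClosure 𝒮 R
  | comp {Ri Rj : Rule} {B' H' : Set Atom} {u : ℕ → Term} :
      InClosure 𝒮 Ri → InClosure 𝒮 Rj →
      IsPieceUnifier Ri.body Rj B' H' u → InClosure 𝒮 (compose Ri Rj B' u)

def ruleSet (L : List Rule) : Set Rule := {R | R ∈ L}

/-- The stability property for a (possibly infinite) rule set. -/
def StableSet (𝒮 : Set Rule) : Prop :=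
  ∀ R1 ∈ 𝒮, ∀ R2 ∈ 𝒮, ∀ B2' H1' u,
    IsPieceUnifier R2.body R1 B2' H1' u → StableUnifier R2 R1 B2' u

/-- `J` is a result of one breadth-first chase step of a (possibly infinite) rule set on `I`,
with fresh pairwise-compatible nulls (semi-oblivious naming). -/
def OneStepResult (𝒮 : Set Rule) (I J : Set Atom) : Prop :=
  ∃ ν : Rule → (ℕ → Term) → ℕ → ℕ,
    (∀ R ∈ 𝒮, ∀ f x, Term.var (ν R f x) ∉ termsOf I) ∧
    (∀ R ∈ 𝒮, ∀ R' ∈ 𝒮, ∀ f f' x x', ν R f x = ν R' f' x' →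
        R = R' ∧ restrict f R.frontier = restrict f' R'.frontier ∧ x = x') ∧
    J = I ∪ {a | ∃ R ∈ 𝒮, ∃ π : ℕ → Term, isHom π R.body I ∧
                  a ∈ substSet (safeSub ν R π) R.head}

/-- `I, R ⊨ q` for a Boolean conjunctive query `q` (a set of atoms). -/
def Entails (L : List Rule) (I q : Set Atom) : Prop :=
  ∀ ν, SONaming L ν → ∃ k σ, isHom σ q (chaseF ν L I k)

/-- The null `t` occurs in at least `n` atoms of `S`. -/
def occursInAtLeast (S : Set Atom) (t : Term) (n : ℕ) : Prop :=
  ∃ F : Set Atom, F ⊆ {a | a ∈ S ∧ t ∈ a.terms} ∧ F.Finite ∧ n ≤ F.ncard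

def FrontierGuarded (R : Rule) : Prop := ∃ a ∈ R.body, R.frontier ⊆ a.vars

def IsDatalog (R : Rule) : Prop := R.exist = ∅ ∧ ∃ a, R.head = {a}

end ER
namespace ER
section Dev

/-! ### Basic lemmas -/

lemma mem_termsOf {S : Set Atom} {t : Term} : t ∈ termsOf S ↔ ∃ a ∈ S, t ∈ a.terms := by
  simp [termsOf]

lemma mem_varsOf {S : Set Atom} {v : ℕ} : v ∈ varsOf S ↔ ∃ a ∈ S, v ∈ a.vars := by
  simp [varsOf]

lemma terms_subset {a : Atom} {S : Set Atom} (h : a ∈ S) : a.terms ⊆ termsOf S :=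
  fun t ht => mem_termsOf.2 ⟨a, h, ht⟩

lemma mem_atom_terms {a : Atom} {t : Term} : t ∈ a.terms ↔ t ∈ a.args := Iff.rfl

lemma mem_atom_vars {a : Atom} {v : ℕ} : v ∈ a.vars ↔ Term.var v ∈ a.args := Iff.rfl

lemma mem_subst_terms {σ : ℕ → Term} {a : Atom} {t : Term} :
    t ∈ (Atom.subst σ a).terms ↔ ∃ s ∈ a.args, t = Term.subst σ s := by
  simp only [Atom.subst, Atom.terms, Set.mem_setOf_eq, List.mem_map]
  constructor
  · rintro ⟨s, hs, rfl⟩; exact ⟨s, hs, rfl⟩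
  · rintro ⟨s, hs, rfl⟩; exact ⟨s, hs, rfl⟩

lemma var_mem_varsOf {S : Set Atom} {y : ℕ} (h : Term.var y ∈ termsOf S) : y ∈ varsOf S := by
  obtain ⟨a, ha, hy⟩ := mem_termsOf.1 h
  exact mem_varsOf.2 ⟨a, ha, hy⟩

lemma frontier_sub_body (R : Rule) : R.frontier ⊆ varsOf R.body := Set.inter_subset_left

lemma varsHead_sub (R : Rule) : varsOf R.head ⊆ R.frontier ∪ R.exist := by
  intro v hv
  by_cases hb : v ∈ varsOf R.body
  · exact Or.inl ⟨hb, hv⟩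
  · exact Or.inr ⟨hv, hb⟩

lemma exist_not_body {R : Rule} {v : ℕ} (h : v ∈ varsOf R.body) : v ∉ R.exist :=
  fun he => he.2 h

lemma restrict_idem (f : ℕ → Term) (F : Set ℕ) : restrict (restrict f F) F = restrict f F := by
  funext x; by_cases h : x ∈ F <;> simp [restrict, h]

lemma restrict_mem {f : ℕ → Term} {F : Set ℕ} {x : ℕ} (h : x ∈ F) : restrict f F x = f x := by
  simp [restrict, h]

lemma restrict_not_mem {f : ℕ → Term} {F : Set ℕ} {x : ℕ} (h : x ∉ F) :
    restrict f F x = Term.const 0 := by simp [restrict, h]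

lemma atom_terms_finite (a : Atom) : a.terms.Finite := a.args.finite_toSet

lemma atom_vars_finite (a : Atom) : a.vars.Finite := by
  have h : a.vars ⊆ (fun t => match t with | .var v => v | .const _ => 0) '' a.terms := by
    intro v hv; exact ⟨Term.var v, hv, rfl⟩
  exact ((atom_terms_finite a).image _).subset h

lemma termsOf_finite {S : Set Atom} (h : S.Finite) : (termsOf S).Finite :=
  h.biUnion (fun a _ => atom_terms_finite a)

lemma varsOf_finite {S : Set Atom} (h : S.Finite) : (varsOf S).Finite :=
  h.biUnion (fun a _ => atom_vars_finite a)

lemma termsOf_substSet {σ : ℕ → Term} {S : Set Atom} {t : Term}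
    (h : t ∈ termsOf (substSet σ S)) : ∃ s ∈ termsOf S, t = Term.subst σ s := by
  obtain ⟨b, hb, ht⟩ := mem_termsOf.1 h
  obtain ⟨a, ha, rfl⟩ := hb
  obtain ⟨s, hs, hts⟩ := mem_subst_terms.1 ht
  exact ⟨s, mem_termsOf.2 ⟨a, ha, hs⟩, hts⟩

lemma hom_var_mem {π : ℕ → Term} {S T : Set Atom} (h : isHom π S T) {x : ℕ}
    (hx : x ∈ varsOf S) : π x ∈ termsOf T := by
  obtain ⟨a, ha, hva⟩ := mem_varsOf.1 hx
  have hmem : Atom.subst π a ∈ T := h ⟨a, ha, rfl⟩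
  exact terms_subset hmem (mem_subst_terms.2 ⟨Term.var x, hva, rfl⟩)

lemma isHom_mono {π : ℕ → Term} {B S S' : Set Atom} (h : isHom π B S) (hs : S ⊆ S') :
    isHom π B S' := Set.Subset.trans h hs

lemma linked_symm {T : Set Term} {a b : Atom} (h : linked T a b) : linked T b a := by
  obtain ⟨t, h1, h2, h3⟩ := h; exact ⟨t, h1, h3, h2⟩

variable (ν : Rule → (ℕ → Term) → ℕ → ℕ) (L : List Rule) (I : Set Atom)

lemma chaseF_zero : chaseF ν L I 0 = I := rfl

lemma chaseF_succ (m : ℕ) : chaseF ν L I (m+1) = chaseStep ν L (chaseF ν L I m) := rfl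

lemma chaseF_mono : ∀ {m m' : ℕ}, m ≤ m' → chaseF ν L I m ⊆ chaseF ν L I m' := by
  intro m m' h
  induction h with
  | refl => exact subset_rfl
  | step h ih => exact ih.trans Set.subset_union_left

lemma chaseF_le_inf (m : ℕ) : chaseF ν L I m ⊆ chaseInf ν L I :=
  Set.subset_iUnion (fun j => chaseF ν L I j) m

/-! ### Produced sets of triggers -/

def Dset (T : Rule × (ℕ → Term)) : Set Atom := substSet (safeSub ν T.1 T.2) T.1.head

lemma safeSub_restrict (R : Rule) (π : ℕ → Term) :
    ∀ y ∈ varsOf R.head, safeSub ν R π y = safeSub ν R (restrict π R.frontier) y := by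
  intro y hy
  unfold safeSub
  by_cases he : y ∈ R.exist
  · simp [he, restrict_idem]
  · have hf : y ∈ R.frontier := (varsHead_sub R hy).resolve_right he
    simp [he, restrict_mem hf]

lemma subst_congr {σ τ : ℕ → Term} {a : Atom} (h : ∀ v ∈ a.vars, σ v = τ v) :
    Atom.subst σ a = Atom.subst τ a := by
  unfold Atom.subst
  congr 1
  apply List.map_congr_left
  intro s hs
  cases s with
  | const c => rfl
  | var v => exact h v hs

lemma produced_eq (R : Rule) (π : ℕ → Term) :
    substSet (safeSub ν R π) R.head = Dset ν (R, restrict π R.frontier) := by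
  unfold Dset substSet
  apply Set.image_congr
  intro a ha
  exact subst_congr (fun v hv => safeSub_restrict ν R π v (mem_varsOf.2 ⟨a, ha, hv⟩))

lemma producedAt_eq (r : ℕ → ℕ) (π : ℕ → ℕ → Term) (j : ℕ) :
    producedAt ν L r π j
      = Dset ν (ruleAt L r j, restrict (π j) (ruleAt L r j).frontier) :=
  produced_eq ν (ruleAt L r j) (π j)

/-! ### Used triggers and ranks -/

def UsedT (T : Rule × (ℕ → Term)) : Prop :=
  T.1 ∈ L ∧ ∃ m : ℕ, ∃ π : ℕ → Term, isHom π T.1.body (chaseF ν L I m) ∧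
    T.2 = restrict π T.1.frontier

def rankSet (T : Rule × (ℕ → Term)) : Set ℕ :=
  {m | ∃ π, isHom π T.1.body (chaseF ν L I m) ∧ T.2 = restrict π T.1.frontier}

def rankT (T : Rule × (ℕ → Term)) : ℕ := sInf (rankSet ν L I T)

lemma rank_spec {T : Rule × (ℕ → Term)} (h : UsedT ν L I T) :
    ∃ π, isHom π T.1.body (chaseF ν L I (rankT ν L I T)) ∧
      T.2 = restrict π T.1.frontier := by
  obtain ⟨m, π, h1, h2⟩ := h.2
  exact Nat.sInf_mem (⟨m, π, h1, h2⟩ : (rankSet ν L I T).Nonempty)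

lemma rank_le {T : Rule × (ℕ → Term)} {m : ℕ} (h : m ∈ rankSet ν L I T) :
    rankT ν L I T ≤ m := Nat.sInf_le h

lemma used_f_eq {T : Rule × (ℕ → Term)} (h : UsedT ν L I T) :
    T.2 = restrict T.2 T.1.frontier := by
  obtain ⟨m, π, _, h2⟩ := h.2
  rw [h2, restrict_idem]

lemma rank_zero_allC {T : Rule × (ℕ → Term)} (hI : IsInstance I) (hT : UsedT ν L I T)
    (h0 : rankT ν L I T = 0) : ∀ x ∈ T.1.frontier, (T.2 x).isConst := by
  obtain ⟨π, hhom, hfeq⟩ := rank_spec ν L I hT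
  rw [h0] at hhom
  intro x hx
  have hterm : π x ∈ termsOf I := hom_var_mem hhom (frontier_sub_body T.1 hx)
  rw [hfeq, restrict_mem hx]
  exact hI.2 _ hterm

lemma Dset_sub_inf {T : Rule × (ℕ → Term)} (hT : UsedT ν L I T) :
    Dset ν T ⊆ chaseInf ν L I := by
  obtain ⟨m, π, hhom, hfeq⟩ := hT.2
  have : Dset ν T = substSet (safeSub ν T.1 π) T.1.head := by
    rw [produced_eq ν T.1 π]
    obtain ⟨R, f⟩ := T
    simp only at hfeq
    rw [hfeq]
  rw [this]
  intro a ha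
  apply chaseF_le_inf ν L I (m+1)
  rw [chaseF_succ]
  exact Or.inr ⟨T.1, hT.1, π, hhom, ha⟩

lemma null_origin (hI : IsInstance I) :
    ∀ m t, t ∈ termsOf (chaseF ν L I m) → ¬ t.isConst →
    ∃ T y, UsedT ν L I T ∧ rankT ν L I T < m ∧ y ∈ T.1.exist ∧
      t = Term.var (ν T.1 T.2 y) := by
  intro m
  induction m with
  | zero => intro t ht hc; exact absurd (hI.2 t ht) hc
  | succ m ih =>
    intro t ht hc
    obtain ⟨a, ha, hta⟩ := mem_termsOf.1 ht
    rw [chaseF_succ] at ha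
    rcases ha with ha | ha
    · obtain ⟨T, y, h1, h2, h3, h4⟩ := ih t (mem_termsOf.2 ⟨a, ha, hta⟩) hc
      exact ⟨T, y, h1, h2.trans (Nat.lt_succ_self m), h3, h4⟩
    · obtain ⟨R, hR, π, hhom, haD⟩ := ha
      obtain ⟨b, hb, rfl⟩ := haD
      obtain ⟨s, hs, hts⟩ := mem_subst_terms.1 hta
      cases s with
      | const c => rw [hts] at hc; exact absurd trivial hc
      | var y =>
        have hyh : y ∈ varsOf R.head := mem_varsOf.2 ⟨b, hb, hs⟩
        by_cases he : y ∈ R.exist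
        · refine ⟨(R, restrict π R.frontier), y, ⟨hR, m, π, hhom, rfl⟩, ?_, he, ?_⟩
          · exact Nat.lt_succ_of_le (rank_le ν L I ⟨π, hhom, rfl⟩)
          · rw [hts]; unfold safeSub; simp [Term.subst, he]
        · have hf : y ∈ R.frontier := (varsHead_sub R hyh).resolve_right he
          have hts' : t = π y := by rw [hts]; unfold safeSub; simp [Term.subst, he]
          have : π y ∈ termsOf (chaseF ν L I m) :=
            hom_var_mem hhom (frontier_sub_body R hf)
          rw [hts'] at hc ⊢
          obtain ⟨T, y', h1, h2, h3, h4⟩ := ih (π y) this hc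
          exact ⟨T, y', h1, h2.trans (Nat.lt_succ_self m), h3, h4⟩

lemma owner_unique (hν : SONaming L ν) {T T' : Rule × (ℕ → Term)} {y y' : ℕ}
    (hT : UsedT ν L I T) (hT' : UsedT ν L I T')
    (h : ν T.1 T.2 y = ν T'.1 T'.2 y') : T = T' ∧ y = y' := by
  obtain ⟨hR, hf, hy⟩ := hν.2 T.1 hT.1 T'.1 hT'.1 T.2 T'.2 y y' h
  refine ⟨Prod.ext_iff.mpr ⟨hR, ?_⟩, hy⟩
  calc T.2 = restrict T.2 T.1.frontier := used_f_eq ν L I hT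
    _ = restrict T'.2 T'.1.frontier := hf
    _ = T'.2 := (used_f_eq ν L I hT').symm

lemma mem_terms_D {R : Rule} {f : ℕ → Term} (hwf : WfRule R)
    (hf : f = restrict f R.frontier) {t : Term} (ht : t ∈ termsOf (Dset ν (R, f))) :
    (∃ y ∈ R.exist, t = Term.var (ν R f y)) ∨ ∃ y ∈ R.frontier, t = f y := by
  obtain ⟨s, hs, hts⟩ := termsOf_substSet ht
  cases s with
  | const c =>
    exact absurd trivial (hwf.2.2.2.2 (Term.const c) (by
      obtain ⟨a, ha, hsa⟩ := mem_termsOf.1 hs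
      exact mem_termsOf.2 ⟨a, Or.inr ha, hsa⟩))
  | var y =>
    have hy : y ∈ varsOf R.head := var_mem_varsOf hs
    rcases varsHead_sub R hy with hfr | he
    · right
      refine ⟨y, hfr, ?_⟩
      rw [hts]
      unfold safeSub
      simp [Term.subst, exist_not_body (frontier_sub_body R hfr)]
    · left
      refine ⟨y, he, ?_⟩
      rw [hts]
      unfold safeSub
      simp only [Term.subst, he, if_pos]
      rw [← hf]

lemma atom_trigger (hI : IsInstance I) :
    ∀ m, ∀ a ∈ chaseF ν L I m,
      (∀ t ∈ a.terms, t.isConst) ∨ ∃ T, UsedT ν L I T ∧ a ∈ Dset ν T := by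
  intro m
  induction m with
  | zero => intro a ha; exact Or.inl (fun t ht => hI.2 t (terms_subset ha ht))
  | succ m ih =>
    intro a ha
    rw [chaseF_succ] at ha
    rcases ha with ha | ha
    · exact ih a ha
    · obtain ⟨R, hR, π, hhom, haD⟩ := ha
      refine Or.inr ⟨(R, restrict π R.frontier), ⟨hR, m, π, hhom, rfl⟩, ?_⟩
      rw [← produced_eq]
      exact haD

/-! ### Derivations -/

lemma termsOf_mono {S S' : Set Atom} (h : S ⊆ S') : termsOf S ⊆ termsOf S' := by
  intro t ht
  obtain ⟨a, ha, hta⟩ := mem_termsOf.1 ht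
  exact mem_termsOf.2 ⟨a, h ha, hta⟩

lemma ruleAt_mem {L : List Rule} {r : ℕ → ℕ} {j : ℕ} (h : r j < L.length) :
    ruleAt L r j ∈ L := by
  unfold ruleAt
  rw [List.getD_eq_getElem _ _ h]
  exact List.getElem_mem _

lemma derivState_zero (r : ℕ → ℕ) (π : ℕ → ℕ → Term) : derivState ν L I r π 0 = I := rfl

lemma derivState_succ (r : ℕ → ℕ) (π : ℕ → ℕ → Term) (j : ℕ) :
    derivState ν L I r π (j+1) = derivState ν L I r π j ∪ producedAt ν L r π j := rfl

lemma derivState_mono (r : ℕ → ℕ) (π : ℕ → ℕ → Term) :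
    ∀ {j j' : ℕ}, j ≤ j' → derivState ν L I r π j ⊆ derivState ν L I r π j' := by
  intro j j' h
  induction h with
  | refl => exact subset_rfl
  | step h ih => exact ih.trans Set.subset_union_left

lemma producedAt_congr {r r' : ℕ → ℕ} {π π' : ℕ → ℕ → Term} {j : ℕ}
    (hr : r j = r' j) (hπ : π j = π' j) : producedAt ν L r π j = producedAt ν L r' π' j := by
  unfold producedAt ruleAt
  rw [hr, hπ]

lemma derivState_congr {r r' : ℕ → ℕ} {π π' : ℕ → ℕ → Term} :
    ∀ {j : ℕ}, (∀ i < j, r i = r' i ∧ π i = π' i) →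
      derivState ν L I r π j = derivState ν L I r' π' j := by
  intro j
  induction j with
  | zero => intro _; rfl
  | succ j ih =>
    intro h
    rw [derivState_succ, derivState_succ,
      ih (fun i hi => h i (hi.trans (Nat.lt_succ_self j))),
      producedAt_congr ν L (h j (Nat.lt_succ_self j)).1 (h j (Nat.lt_succ_self j)).2]

lemma append_one {n : ℕ} {r : ℕ → ℕ} {π : ℕ → ℕ → Term}
    (hd : IsDeriv ν L I n r π) {idx : ℕ} {σ : ℕ → Term}
    (hidx : idx < L.length)
    (hhom : isHom σ (L.getD idx ⟨∅, ∅⟩).body (derivState ν L I r π n)) :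
    IsDeriv ν L I (n+1) (Function.update r n idx) (Function.update π n σ) ∧
      (∀ j ≤ n, derivState ν L I (Function.update r n idx) (Function.update π n σ) j
          = derivState ν L I r π j) ∧
      derivState ν L I (Function.update r n idx) (Function.update π n σ) (n+1)
        = derivState ν L I r π n
          ∪ substSet (safeSub ν (L.getD idx ⟨∅, ∅⟩) σ) (L.getD idx ⟨∅, ∅⟩).head := by
  have hst : ∀ j ≤ n, derivState ν L I (Function.update r n idx) (Function.update π n σ) j
      = derivState ν L I r π j := by
    intro j hj
    exact (derivState_congr ν L I (fun i hi =>
      ⟨(Function.update_of_ne (by omega : i ≠ n) idx r).symm,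
       (Function.update_of_ne (by omega : i ≠ n) σ π).symm⟩)).symm
  have hurn : Function.update r n idx n = idx := Function.update_self _ _ _
  have huπn : Function.update π n σ n = σ := Function.update_self _ _ _
  have hran : ruleAt L (Function.update r n idx) n = L.getD idx ⟨∅, ∅⟩ := by
    unfold ruleAt; rw [hurn]
  refine ⟨?_, hst, ?_⟩
  · intro j hj
    rcases Nat.lt_succ_iff_lt_or_eq.1 hj with hj | rfl
    · have e1 : Function.update r n idx j = r j := Function.update_of_ne (by omega) _ _
      have e2 : Function.update π n σ j = π j := Function.update_of_ne (by omega) _ _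
      have hra : ruleAt L (Function.update r n idx) j = ruleAt L r j := by
        unfold ruleAt; rw [e1]
      refine ⟨by rw [e1]; exact (hd j hj).1, ?_⟩
      rw [hra, e2, hst j hj.le]
      exact (hd j hj).2
    · refine ⟨by rw [hurn]; exact hidx, ?_⟩
      rw [hran, huπn, hst j le_rfl]
      exact hhom
  · rw [derivState_succ, hst n le_rfl]
    congr 1
    unfold producedAt
    rw [hran, huπn]

lemma appendMany (Cm : Set Atom) :
    ∀ ts : List (ℕ × (ℕ → Term)), ∀ n r π,
      IsDeriv ν L I n r π →
      (∀ j < n, isHom (π j) (ruleAt L r j).body Cm) →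
      (∀ p ∈ ts, p.1 < L.length ∧
        isHom p.2 (L.getD p.1 ⟨∅, ∅⟩).body (derivState ν L I r π n) ∧
        isHom p.2 (L.getD p.1 ⟨∅, ∅⟩).body Cm) →
      ∃ n' r' π', IsDeriv ν L I n' r' π' ∧
        derivState ν L I r π n ⊆ derivState ν L I r' π' n' ∧
        (∀ j < n', isHom (π' j) (ruleAt L r' j).body Cm) ∧
        (∀ p ∈ ts, substSet (safeSub ν (L.getD p.1 ⟨∅, ∅⟩) p.2) (L.getD p.1 ⟨∅, ∅⟩).head
            ⊆ derivState ν L I r' π' n') := by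
  intro ts
  induction ts with
  | nil =>
    intro n r π hd hC _
    exact ⟨n, r, π, hd, subset_rfl, hC, by simp⟩
  | cons p ts ih =>
    intro n r π hd hC hts
    obtain ⟨hp1, hp2, hp3⟩ := hts p (List.mem_cons_self)
    obtain ⟨hd2, hst, hnew⟩ := append_one ν L I hd hp1 hp2
    have hC2 : ∀ j < n+1,
        isHom (Function.update π n p.2 j) (ruleAt L (Function.update r n p.1) j).body Cm := by
      intro j hj
      rcases Nat.lt_succ_iff_lt_or_eq.1 hj with hj | rfl
      · have e1 : Function.update r n p.1 j = r j := Function.update_of_ne (by omega) _ _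
        have e2 : Function.update π n p.2 j = π j := Function.update_of_ne (by omega) _ _
        have hra : ruleAt L (Function.update r n p.1) j = ruleAt L r j := by
          unfold ruleAt; rw [e1]
        rw [hra, e2]
        exact hC j hj
      · have hra : ruleAt L (Function.update r j p.1) j = L.getD p.1 ⟨∅, ∅⟩ := by
          unfold ruleAt; rw [Function.update_self]
        rw [hra, Function.update_self]
        exact hp3
    have hsub1 : derivState ν L I r π n
        ⊆ derivState ν L I (Function.update r n p.1) (Function.update π n p.2) (n+1) := by
      rw [hnew]; exact Set.subset_union_left
    have hts2 : ∀ q ∈ ts, q.1 < L.length ∧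
        isHom q.2 (L.getD q.1 ⟨∅, ∅⟩).body
          (derivState ν L I (Function.update r n p.1) (Function.update π n p.2) (n+1)) ∧
        isHom q.2 (L.getD q.1 ⟨∅, ∅⟩).body Cm := by
      intro q hq
      obtain ⟨h1, h2, h3⟩ := hts q (List.mem_cons_of_mem _ hq)
      exact ⟨h1, isHom_mono h2 hsub1, h3⟩
    obtain ⟨n', r', π', hd', hsub', hC', hcov'⟩ := ih (n+1) _ _ hd2 hC2 hts2
    refine ⟨n', r', π', hd', hsub1.trans hsub', hC', ?_⟩
    intro q hq
    rcases List.mem_cons.1 hq with rfl | hq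
    · refine Set.Subset.trans ?_ hsub'
      rw [hnew]
      exact Set.subset_union_right
    · exact hcov' q hq

lemma realize (hL : WfList L) :
    ∀ m (A : Set Atom), A.Finite → A ⊆ chaseF ν L I m →
      ∃ n r π, IsDeriv ν L I n r π ∧ A ⊆ derivState ν L I r π n ∧
        ∀ j < n, isHom (π j) (ruleAt L r j).body (chaseF ν L I (m-1)) := by
  intro m
  induction m with
  | zero =>
    intro A hAf hA
    exact ⟨0, fun _ => 0, fun _ _ => Term.const 0, fun k hk => absurd hk (by omega),
      hA, fun j hj => absurd hj (by omega)⟩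
  | succ m ih =>
    intro A hAf hA
    set A2 : Set Atom := {a ∈ A | a ∉ chaseF ν L I m} with hA2def
    have hA2f : A2.Finite := hAf.subset (Set.sep_subset _ _)
    have hch : ∀ a : Atom, ∃ q : ℕ × (ℕ → Term), a ∈ A2 →
        q.1 < L.length ∧ isHom q.2 (L.getD q.1 ⟨∅, ∅⟩).body (chaseF ν L I m) ∧
        a ∈ substSet (safeSub ν (L.getD q.1 ⟨∅, ∅⟩) q.2) (L.getD q.1 ⟨∅, ∅⟩).head := by
      intro a
      by_cases ha : a ∈ A2
      · have h1 : a ∈ chaseF ν L I (m+1) := hA ha.1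
        rw [chaseF_succ] at h1
        rcases h1 with h1 | h1
        · exact absurd h1 ha.2
        · obtain ⟨R, hR, π, hhom, haD⟩ := h1
          obtain ⟨i, hi, hieq⟩ := List.mem_iff_getElem.1 hR
          have hgd : L.getD i ⟨∅, ∅⟩ = R := by rw [List.getD_eq_getElem _ _ hi, hieq]
          exact ⟨(i, π), fun _ => ⟨hi, by rw [hgd]; exact hhom, by rw [hgd]; exact haD⟩⟩
      · exact ⟨(0, fun _ => Term.const 0), fun h => absurd h ha⟩
    choose Fc hFc using hch
    set B : Set Atom := (A ∩ chaseF ν L I m) ∪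
      ⋃ a ∈ A2, substSet (Fc a).2 (L.getD (Fc a).1 ⟨∅, ∅⟩).body with hBdef
    have hBf : B.Finite := by
      apply Set.Finite.union (hAf.subset Set.inter_subset_left)
      apply hA2f.biUnion
      intro a ha
      apply Set.Finite.image
      have hmem : L.getD (Fc a).1 ⟨∅, ∅⟩ ∈ L := by
        rw [List.getD_eq_getElem _ _ ((hFc a ha).1)]
        exact List.getElem_mem _
      exact (hL _ hmem).1
    have hBsub : B ⊆ chaseF ν L I m := by
      apply Set.union_subset Set.inter_subset_right
      intro b hb
      simp only [Set.mem_iUnion] at hb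
      obtain ⟨a, ha, hb⟩ := hb
      exact (hFc a ha).2.1 hb
    obtain ⟨n, r, π, hd, hBst, hhoms⟩ := ih B hBf hBsub
    have hhoms' : ∀ j < n, isHom (π j) (ruleAt L r j).body (chaseF ν L I m) :=
      fun j hj => isHom_mono (hhoms j hj) (chaseF_mono ν L I (by omega))
    set l := hA2f.toFinset.toList with hldef
    have hmeml : ∀ a, a ∈ l ↔ a ∈ A2 := by
      intro a
      rw [hldef, Finset.mem_toList, Set.Finite.mem_toFinset]
    have htsok : ∀ q ∈ l.map Fc, q.1 < L.length ∧
        isHom q.2 (L.getD q.1 ⟨∅, ∅⟩).body (derivState ν L I r π n) ∧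
        isHom q.2 (L.getD q.1 ⟨∅, ∅⟩).body (chaseF ν L I m) := by
      intro q hq
      obtain ⟨a, hal, rfl⟩ := List.mem_map.1 hq
      have ha2 : a ∈ A2 := (hmeml a).1 hal
      obtain ⟨h1, h2, h3⟩ := hFc a ha2
      refine ⟨h1, isHom_mono ?_ hBst, h2⟩
      intro b hb
      exact Or.inr (Set.mem_biUnion ha2 hb)
    obtain ⟨n', r', π', hd', hsub', hC', hcov'⟩ :=
      appendMany ν L I (chaseF ν L I m) (l.map Fc) n r π hd hhoms' htsok
    refine ⟨n', r', π', hd', ?_, by simpa using hC'⟩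
    intro a ha
    by_cases ham : a ∈ chaseF ν L I m
    · exact hsub' (hBst (Or.inl ⟨ha, ham⟩))
    · have ha2 : a ∈ A2 := ⟨ha, ham⟩
      have hmm : Fc a ∈ l.map Fc := List.mem_map_of_mem ((hmeml a).2 ha2)
      exact hcov' (Fc a) hmm ((hFc a ha2).2.2)

/-! ### Classification of used triggers -/

def AllC (T : Rule × (ℕ → Term)) : Prop := ∀ x ∈ T.1.frontier, (T.2 x).isConst

def EP (T : Rule × (ℕ → Term)) : Prop :=
  ∃ p, UsedT ν L I p ∧ rankT ν L I p < rankT ν L I T ∧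
    ∀ x ∈ T.1.frontier, T.2 x ∈ termsOf (Dset ν p)

lemma main_classify (hL : WfList L) (hp : PiecefulSet L) (hν : SONaming L ν)
    (hI : IsInstance I) :
    ∀ T, UsedT ν L I T → AllC T ∨ EP ν L I T := by
  intro T hT
  obtain ⟨π, hhom, hfeq⟩ := rank_spec ν L I hT
  rcases hm : rankT ν L I T with _ | m'
  · exact Or.inl (rank_zero_allC ν L I hI hT hm)
  · rw [hm] at hhom
    have hAs : substSet π T.1.body ⊆ chaseF ν L I (m'+1) := hhom
    have hAf : (substSet π T.1.body).Finite := ((hL _ hT.1).1).image _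
    obtain ⟨n, r, π2, hd, hAst, hhoms⟩ := realize ν L I hL (m'+1) _ hAf hAs
    simp only [Nat.add_sub_cancel] at hhoms
    obtain ⟨i, hi, hieq⟩ := List.mem_iff_getElem.1 hT.1
    have hgd : L.getD i ⟨∅, ∅⟩ = T.1 := by rw [List.getD_eq_getElem _ _ hi, hieq]
    have hhomst : isHom π (L.getD i ⟨∅, ∅⟩).body (derivState ν L I r π2 n) := by
      rw [hgd]; exact hAst
    obtain ⟨hd2, hst2, hnew2⟩ := append_one ν L I hd hi hhomst
    have hpf := hp ν hν I hI (n+1) _ _ hd2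
    have hrule : ruleAt L (Function.update r n i) n = T.1 := by
      unfold ruleAt; rw [Function.update_self]; exact hgd
    have hπn : Function.update π2 n π n = π := Function.update_self _ _ _
    rcases hpf n (Nat.lt_succ_self n) with hcase | ⟨j, hj, hcase⟩
    · left
      intro x hx
      rw [hrule, hπn] at hcase
      rw [hfeq, restrict_mem hx]
      exact hI.2 _ (hcase x hx)
    · right
      rw [hrule, hπn] at hcase
      have hrj : Function.update r n i j = r j := Function.update_of_ne (by omega) _ _
      have hπj : Function.update π2 n π j = π2 j := Function.update_of_ne (by omega) _ _
      have hrule2 : ruleAt L (Function.update r n i) j = ruleAt L r j := by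
        unfold ruleAt; rw [hrj]
      have hprod := producedAt_eq ν L (Function.update r n i) (Function.update π2 n π) j
      rw [hrule2, hπj] at hprod
      have hRjmem : ruleAt L r j ∈ L := ruleAt_mem (hd j hj).1
      have hhomj : isHom (π2 j) (ruleAt L r j).body (chaseF ν L I m') := hhoms j hj
      set p : Rule × (ℕ → Term) :=
        (ruleAt L r j, restrict (π2 j) (ruleAt L r j).frontier) with hpdef
      have hpu : UsedT ν L I p := ⟨hRjmem, m', π2 j, hhomj, rfl⟩
      have hrankp : rankT ν L I p ≤ m' := rank_le ν L I ⟨π2 j, hhomj, rfl⟩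
      refine ⟨p, hpu, by omega, ?_⟩
      intro x hx
      rw [hfeq, restrict_mem hx]
      rw [hprod] at hcase
      exact hcase x hx

/-! ### Parents and roots -/

def parentT (T : Rule × (ℕ → Term)) : Rule × (ℕ → Term) :=
  if h : EP ν L I T then h.choose else T

lemma parent_spec {T : Rule × (ℕ → Term)} (h : EP ν L I T) :
    UsedT ν L I (parentT ν L I T) ∧ rankT ν L I (parentT ν L I T) < rankT ν L I T ∧
      ∀ x ∈ T.1.frontier, T.2 x ∈ termsOf (Dset ν (parentT ν L I T)) := by
  unfold parentT
  rw [dif_pos h]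
  exact h.choose_spec

def rootFuel : ℕ → Rule × (ℕ → Term) → Rule × (ℕ → Term)
  | 0, T => T
  | n+1, T => if AllC T then T else rootFuel n (parentT ν L I T)

def rootT (T : Rule × (ℕ → Term)) : Rule × (ℕ → Term) :=
  rootFuel ν L I (rankT ν L I T + 1) T

lemma rootFuel_succ (n : ℕ) (T : Rule × (ℕ → Term)) :
    rootFuel ν L I (n+1) T
      = if AllC T then T else rootFuel ν L I n (parentT ν L I T) := rfl

lemma rootFuel_eq (hmain : ∀ T, UsedT ν L I T → AllC T ∨ EP ν L I T) :
    ∀ N T, UsedT ν L I T → rankT ν L I T ≤ N →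
    ∀ n n', rankT ν L I T < n → rankT ν L I T < n' →
      rootFuel ν L I n T = rootFuel ν L I n' T := by
  intro N
  induction N with
  | zero =>
    intro T hT h0 n n' hn hn'
    obtain ⟨a, rfl⟩ : ∃ a, n = a + 1 := ⟨n - 1, by omega⟩
    obtain ⟨a', rfl⟩ : ∃ a', n' = a' + 1 := ⟨n' - 1, by omega⟩
    rcases hmain T hT with hA | hE
    · rw [rootFuel_succ, rootFuel_succ, if_pos hA, if_pos hA]
    · have := (parent_spec ν L I hE).2.1
      omega
  | succ N ih =>
    intro T hT hN n n' hn hn'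
    obtain ⟨a, rfl⟩ : ∃ a, n = a + 1 := ⟨n - 1, by omega⟩
    obtain ⟨a', rfl⟩ : ∃ a', n' = a' + 1 := ⟨n' - 1, by omega⟩
    by_cases hA : AllC T
    · rw [rootFuel_succ, rootFuel_succ, if_pos hA, if_pos hA]
    · have hE := (hmain T hT).resolve_left hA
      obtain ⟨hu, hr, _⟩ := parent_spec ν L I hE
      rw [rootFuel_succ, rootFuel_succ, if_neg hA, if_neg hA]
      exact ih (parentT ν L I T) hu (by omega) a a' (by omega) (by omega)

lemma root_fix {T : Rule × (ℕ → Term)} (hA : AllC T) : rootT ν L I T = T := by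
  unfold rootT
  rw [rootFuel_succ, if_pos hA]

lemma root_eq_parent (hmain : ∀ T, UsedT ν L I T → AllC T ∨ EP ν L I T)
    {T : Rule × (ℕ → Term)} (hT : UsedT ν L I T) (hA : ¬ AllC T) :
    rootT ν L I T = rootT ν L I (parentT ν L I T) := by
  have hE := (hmain T hT).resolve_left hA
  obtain ⟨hu, hr, _⟩ := parent_spec ν L I hE
  unfold rootT
  rw [rootFuel_succ, if_neg hA]
  exact rootFuel_eq ν L I hmain (rankT ν L I (parentT ν L I T)) (parentT ν L I T) hu le_rfl
    (rankT ν L I T) (rankT ν L I (parentT ν L I T) + 1) hr (by omega)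

lemma root_props (hmain : ∀ T, UsedT ν L I T → AllC T ∨ EP ν L I T) :
    ∀ N T, UsedT ν L I T → rankT ν L I T ≤ N →
      UsedT ν L I (rootT ν L I T) ∧ AllC (rootT ν L I T) := by
  intro N
  induction N with
  | zero =>
    intro T hT h0
    rcases hmain T hT with hA | hE
    · rw [root_fix ν L I hA]; exact ⟨hT, hA⟩
    · have := (parent_spec ν L I hE).2.1
      omega
  | succ N ih =>
    intro T hT hN
    by_cases hA : AllC T
    · rw [root_fix ν L I hA]; exact ⟨hT, hA⟩
    · have hE := (hmain T hT).resolve_left hA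
      obtain ⟨hu, hr, _⟩ := parent_spec ν L I hE
      rw [root_eq_parent ν L I hmain hT hA]
      exact ih _ hu (by omega)

lemma owner_root (hL : WfList L) (hν : SONaming L ν)
    (hmain : ∀ T, UsedT ν L I T → AllC T ∨ EP ν L I T) :
    ∀ N T, UsedT ν L I T → rankT ν L I T ≤ N →
    ∀ t, ¬ t.isConst → t ∈ termsOf (Dset ν T) →
    ∀ w y, UsedT ν L I w → t = Term.var (ν w.1 w.2 y) →
      rootT ν L I w = rootT ν L I T := by
  intro N
  induction N with
  | zero =>
    intro T hT h0 t htc ht w y hw heq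
    have hD := mem_terms_D ν (hL T.1 hT.1) (used_f_eq ν L I hT)
      (by rw [Prod.mk.eta]; exact ht)
    rcases hD with ⟨y', hy', heqt⟩ | ⟨y', hy', heqt⟩
    · have hνeq : ν w.1 w.2 y = ν T.1 T.2 y' := by
        have := heq.symm.trans heqt
        exact Term.var.inj this
      obtain ⟨hwT, _⟩ := owner_unique ν L I hν hw hT hνeq
      rw [hwT]
    · have hA : AllC T := by
        rcases hmain T hT with hA | hE
        · exact hA
        · have := (parent_spec ν L I hE).2.1
          omega
      rw [heqt] at htc
      exact absurd (hA y' hy') htc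
  | succ N ih =>
    intro T hT hN t htc ht w y hw heq
    have hD := mem_terms_D ν (hL T.1 hT.1) (used_f_eq ν L I hT)
      (by rw [Prod.mk.eta]; exact ht)
    rcases hD with ⟨y', hy', heqt⟩ | ⟨y', hy', heqt⟩
    · have hνeq : ν w.1 w.2 y = ν T.1 T.2 y' := Term.var.inj (heq.symm.trans heqt)
      obtain ⟨hwT, _⟩ := owner_unique ν L I hν hw hT hνeq
      rw [hwT]
    · by_cases hA : AllC T
      · rw [heqt] at htc
        exact absurd (hA y' hy') htc
      · have hE := (hmain T hT).resolve_left hA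
        obtain ⟨hu, hr, himg⟩ := parent_spec ν L I hE
        have htp : t ∈ termsOf (Dset ν (parentT ν L I T)) := by
          rw [heqt]; exact himg y' hy'
        rw [root_eq_parent ν L I hmain hT hA]
        exact ih (parentT ν L I T) hu (by omega) t htc htp w y hw heq


/-! ### Counting lemmas -/

lemma ncard_biUnion_le {α γ : Type*} {S : Set α} (hS : S.Finite) (f : α → Set γ) (b : ℕ)
    (hf : ∀ a ∈ S, (f a).Finite ∧ (f a).ncard ≤ b) :
    (⋃ a ∈ S, f a).Finite ∧ (⋃ a ∈ S, f a).ncard ≤ S.ncard * b := by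
  revert hf
  refine Set.Finite.induction_on
    (motive := fun S _ => (∀ a ∈ S, (f a).Finite ∧ (f a).ncard ≤ b) →
      (⋃ a ∈ S, f a).Finite ∧ (⋃ a ∈ S, f a).ncard ≤ S.ncard * b) S hS ?_ ?_
  · intro _
    simp
  · intro a s ha hs ih hf
    rw [Set.biUnion_insert]
    have h1 := hf a (Set.mem_insert a s)
    have h2 := ih (fun x hx => hf x (Set.mem_insert_of_mem a hx))
    refine ⟨h1.1.union h2.1, ?_⟩
    calc (f a ∪ ⋃ x ∈ s, f x).ncard ≤ (f a).ncard + (⋃ x ∈ s, f x).ncard :=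
          Set.ncard_union_le _ _
      _ ≤ b + s.ncard * b := Nat.add_le_add h1.2 h2.2
      _ = (insert a s).ncard * b := by
          rw [Set.ncard_insert_of_notMem ha hs]; ring

lemma count_funs : ∀ (K : Set ℕ), K.Finite → ∀ (V : Set Term), V.Finite →
    ({g : ℕ → Term | (∀ x ∈ K, g x ∈ V) ∧ ∀ x ∉ K, g x = Term.const 0}).Finite ∧
    ({g : ℕ → Term | (∀ x ∈ K, g x ∈ V) ∧ ∀ x ∉ K, g x = Term.const 0}).ncard
      ≤ V.ncard ^ K.ncard := by
  intro K hK
  refine Set.Finite.induction_on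
    (motive := fun K _ => ∀ (V : Set Term), V.Finite →
      ({g : ℕ → Term | (∀ x ∈ K, g x ∈ V) ∧ ∀ x ∉ K, g x = Term.const 0}).Finite ∧
      ({g : ℕ → Term | (∀ x ∈ K, g x ∈ V) ∧ ∀ x ∉ K, g x = Term.const 0}).ncard
        ≤ V.ncard ^ K.ncard) K hK ?_ ?_
  · intro V hV
    have hsub : {g : ℕ → Term | (∀ x ∈ (∅ : Set ℕ), g x ∈ V) ∧
        ∀ x ∉ (∅ : Set ℕ), g x = Term.const 0} ⊆ {fun _ => Term.const 0} := by
      intro g hg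
      have : g = fun _ => Term.const 0 := funext (fun x => hg.2 x (Set.notMem_empty x))
      simp [this]
    refine ⟨(Set.finite_singleton _).subset hsub, ?_⟩
    calc _ ≤ ({fun _ => Term.const 0} : Set (ℕ → Term)).ncard :=
          Set.ncard_le_ncard hsub (Set.finite_singleton _)
      _ = 1 := Set.ncard_singleton _
      _ ≤ V.ncard ^ (∅ : Set ℕ).ncard := by simp
  · intro a s ha hs ih V hV
    have hG0 := ih V hV
    set G1 := {g : ℕ → Term | (∀ x ∈ insert a s, g x ∈ V) ∧
      ∀ x ∉ insert a s, g x = Term.const 0} with hG1def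
    set G0 := {g : ℕ → Term | (∀ x ∈ s, g x ∈ V) ∧ ∀ x ∉ s, g x = Term.const 0} with hG0def
    set Φ : (ℕ → Term) → Term × (ℕ → Term) :=
      fun g => (g a, Function.update g a (Term.const 0)) with hΦdef
    have hΦinj : Set.InjOn Φ G1 := by
      intro f hf g hg h
      have h1 : f a = g a := congrArg Prod.fst h
      have h2 : Function.update f a (Term.const 0) = Function.update g a (Term.const 0) :=
        congrArg Prod.snd h
      funext x
      by_cases hx : x = a
      · rw [hx]; exact h1
      · have h3 := congrFun h2 x
        rwa [Function.update_of_ne hx, Function.update_of_ne hx] at h3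
    have hΦsub : Φ '' G1 ⊆ V ×ˢ G0 := by
      rintro _ ⟨g, hg, rfl⟩
      simp only [hΦdef]
      refine ⟨hg.1 a (Set.mem_insert a s), ?_, ?_⟩
      · intro x hx
        have hxa : x ≠ a := by rintro rfl; exact ha hx
        show Function.update g a (Term.const 0) x ∈ V
        rw [Function.update_of_ne hxa]
        exact hg.1 x (Set.mem_insert_of_mem a hx)
      · intro x hx
        show Function.update g a (Term.const 0) x = Term.const 0
        by_cases hxa : x = a
        · rw [hxa, Function.update_self]
        · rw [Function.update_of_ne hxa]
          exact hg.2 x (by simp [hxa, hx])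
    have hprodf : (V ×ˢ G0).Finite := hV.prod hG0.1
    have hprodcard : (V ×ˢ G0).ncard ≤ V.ncard * G0.ncard := by
      have heq : V ×ˢ G0 = ⋃ v ∈ V, (fun g => ((v : Term), g)) '' G0 := by
        ext q
        simp only [Set.mem_prod, Set.mem_iUnion, Set.mem_image]
        constructor
        · rintro ⟨h1, h2⟩
          exact ⟨q.1, h1, q.2, h2, by simp⟩
        · rintro ⟨v, hv, g, hg, rfl⟩
          exact ⟨hv, hg⟩
      rw [heq]
      exact (ncard_biUnion_le hV (fun v => (fun g => ((v : Term), g)) '' G0) G0.ncard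
        (fun v _ => ⟨hG0.1.image _, Set.ncard_image_le hG0.1⟩)).2
    have hG1f : G1.Finite := Set.Finite.of_finite_image (hprodf.subset hΦsub) hΦinj
    refine ⟨hG1f, ?_⟩
    have e1 : G1.ncard = (Φ '' G1).ncard := (Set.ncard_image_of_injOn hΦinj).symm
    rw [e1]
    calc (Φ '' G1).ncard ≤ (V ×ˢ G0).ncard := Set.ncard_le_ncard hΦsub hprodf
      _ ≤ V.ncard * G0.ncard := hprodcard
      _ ≤ V.ncard * V.ncard ^ s.ncard := Nat.mul_le_mul_left _ hG0.2
      _ = V.ncard ^ (insert a s).ncard := by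
          rw [Set.ncard_insert_of_notMem ha hs, pow_succ]; ring

def lmax (g : Rule → ℕ) : List Rule → ℕ
  | [] => 0
  | R :: l => max (g R) (lmax g l)

lemma le_lmax {g : Rule → ℕ} {R : Rule} : ∀ {l : List Rule}, R ∈ l → g R ≤ lmax g l := by
  intro l
  induction l with
  | nil => intro h; simp at h
  | cons R' l ih =>
    intro h
    rcases List.mem_cons.1 h with rfl | h
    · exact le_max_left _ _
    · exact (ih h).trans (le_max_right _ _)

lemma frontier_finite {R : Rule} (hwf : WfRule R) : R.frontier.Finite :=
  (varsOf_finite hwf.1).subset (frontier_sub_body R)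

def ChSet (p : Rule × (ℕ → Term)) : Set (Rule × (ℕ → Term)) :=
  {T | UsedT ν L I T ∧ ¬ AllC T ∧ parentT ν L I T = p}

def AiSet (w : Rule × (ℕ → Term)) (i : ℕ) : Set (Rule × (ℕ → Term)) :=
  {T | UsedT ν L I T ∧ rootT ν L I T = w ∧ rankT ν L I T ≤ i}

lemma mem_ChSet {p T : Rule × (ℕ → Term)} :
    T ∈ ChSet ν L I p ↔ UsedT ν L I T ∧ ¬ AllC T ∧ parentT ν L I T = p := Iff.rfl

lemma mem_AiSet {w T : Rule × (ℕ → Term)} {i : ℕ} :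
    T ∈ AiSet ν L I w i ↔
      UsedT ν L I T ∧ rootT ν L I T = w ∧ rankT ν L I T ≤ i := Iff.rfl

end Dev

/-- if a rule set is pieceful and bounded, the size of every piece of the
chase is bounded by a constant depending only on the rule set. -/
theorem pieceful_bounded_piece_bound (L : List Rule) (hL : WfList L)
    (hp : PiecefulSet L) (hb : Bounded L) :
    ∃ c : ℕ, ∀ ν, SONaming L ν → ∀ I, IsInstance I → ∀ Q,
      IsPiece (chaseInf ν L I) (nullsOf (chaseInf ν L I)) Q → Q.ncard ≤ c := by
  obtain ⟨k, hk⟩ := hb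
  set M := lmax (fun R => (termsOf R.head).ncard) L with hM
  set F := lmax (fun R => R.frontier.ncard) L with hF
  set H := lmax (fun R => R.head.ncard) L with hH
  set β := L.length * (M + 1) ^ F with hβ
  refine ⟨1 + (β + 1) ^ (k + 1) * H, ?_⟩
  intro ν hν I hI Q hQ
  have hkeq : chaseF ν L I k = chaseInf ν L I := hk ν hν I hI
  by_cases hcase : ∃ a ∈ Q, ∀ t ∈ a.terms, t.isConst
  · obtain ⟨a, haQ, hac⟩ := hcase
    have hsingle : {a} = Q := by
      apply hQ.2.2.2 {a} (Set.singleton_subset_iff.2 haQ) (Set.singleton_nonempty a)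
      intro b hbS c hc hlink
      obtain ⟨t, htN, htb, htc⟩ := hlink
      rw [Set.mem_singleton_iff] at hc
      rw [hc] at htc
      exact absurd (hac t htc) htN.2
    rw [← hsingle, Set.ncard_singleton]
    exact Nat.le_add_right 1 _
  · push_neg at hcase
    have hmain := main_classify ν L I hL hp hν hI
    have hrank_le_k : ∀ T, UsedT ν L I T → rankT ν L I T ≤ k := by
      intro T hT
      obtain ⟨m, π, hhom, hfeq⟩ := hT.2
      refine rank_le ν L I ⟨π, ?_, hfeq⟩
      have h1 : substSet π T.1.body ⊆ chaseInf ν L I := hhom.trans (chaseF_le_inf ν L I m)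
      rwa [← hkeq] at h1
    have hDfin : ∀ T, UsedT ν L I T → (Dset ν T).Finite ∧ (Dset ν T).ncard ≤ H ∧
        (termsOf (Dset ν T)).Finite ∧ (termsOf (Dset ν T)).ncard ≤ M := by
      intro T hT
      have hwf := hL T.1 hT.1
      have hhead : T.1.head.Finite := hwf.2.1
      have h1 : (Dset ν T).Finite := hhead.image _
      have h2 : (Dset ν T).ncard ≤ H := (Set.ncard_image_le hhead).trans (by rw [hH]; exact le_lmax (g := fun R => R.head.ncard) hT.1)
      have hsub : termsOf (Dset ν T) ⊆ Term.subst (safeSub ν T.1 T.2) '' termsOf T.1.head := by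
        intro t ht
        obtain ⟨s, hs, hts⟩ := termsOf_substSet ht
        exact ⟨s, hs, hts.symm⟩
      have hth : (termsOf T.1.head).Finite := termsOf_finite hhead
      refine ⟨h1, h2, (hth.image _).subset hsub, ?_⟩
      calc (termsOf (Dset ν T)).ncard
          ≤ (Term.subst (safeSub ν T.1 T.2) '' termsOf T.1.head).ncard :=
            Set.ncard_le_ncard hsub (hth.image _)
        _ ≤ (termsOf T.1.head).ncard := Set.ncard_image_le hth
        _ ≤ M := by rw [hM]; exact le_lmax (g := fun R => (termsOf R.head).ncard) hT.1
    have hCh : ∀ p, UsedT ν L I p → (ChSet ν L I p).Finite ∧ (ChSet ν L I p).ncard ≤ β := by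
      intro p hpu
      have hVf := (hDfin p hpu).2.2.1
      have hVc := (hDfin p hpu).2.2.2
      have hsub : ChSet ν L I p ⊆
          ⋃ R ∈ {R : Rule | R ∈ L}, (fun f => (R, f)) ''
            {g : ℕ → Term | (∀ x ∈ R.frontier, g x ∈ termsOf (Dset ν p)) ∧
              ∀ x ∉ R.frontier, g x = Term.const 0} := by
        intro T hT
        obtain ⟨hTu, hTa, hTp⟩ := hT
        have hE : EP ν L I T := (hmain T hTu).resolve_left hTa
        have hspec := parent_spec ν L I hE
        rw [hTp] at hspec
        refine Set.mem_biUnion (hTu.1 : T.1 ∈ {R : Rule | R ∈ L}) ⟨T.2, ⟨?_, ?_⟩, ?_⟩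
        · exact fun x hx => hspec.2.2 x hx
        · intro x hx
          rw [used_f_eq ν L I hTu]
          exact restrict_not_mem hx
        · simp
      have hper : ∀ R ∈ {R : Rule | R ∈ L},
          ((fun f => (R, f)) ''
            {g : ℕ → Term | (∀ x ∈ R.frontier, g x ∈ termsOf (Dset ν p)) ∧
              ∀ x ∉ R.frontier, g x = Term.const 0}).Finite ∧
          ((fun f => (R, f)) ''
            {g : ℕ → Term | (∀ x ∈ R.frontier, g x ∈ termsOf (Dset ν p)) ∧
              ∀ x ∉ R.frontier, g x = Term.const 0}).ncard ≤ (M+1)^F := by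
        intro R hR
        have hwf := hL R hR
        have hcf := count_funs R.frontier (frontier_finite hwf) (termsOf (Dset ν p)) hVf
        have hinj : Set.InjOn (fun f => ((R : Rule), f))
            {g : ℕ → Term | (∀ x ∈ R.frontier, g x ∈ termsOf (Dset ν p)) ∧
              ∀ x ∉ R.frontier, g x = Term.const 0} :=
          fun f _ g _ h => congrArg Prod.snd h
        refine ⟨hcf.1.image _, ?_⟩
        rw [Set.ncard_image_of_injOn hinj]
        calc _ ≤ (termsOf (Dset ν p)).ncard ^ R.frontier.ncard := hcf.2
          _ ≤ (M+1) ^ R.frontier.ncard := Nat.pow_le_pow_left (hVc.trans (Nat.le_succ M)) _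
          _ ≤ (M+1) ^ F := Nat.pow_le_pow_right (Nat.le_add_left 1 M) (by rw [hF]; exact le_lmax (g := fun R => R.frontier.ncard) hR)
      have hLf : ({R : Rule | R ∈ L}).Finite := L.finite_toSet
      have hU := ncard_biUnion_le hLf
        (fun R => (fun f => (R, f)) ''
          {g : ℕ → Term | (∀ x ∈ R.frontier, g x ∈ termsOf (Dset ν p)) ∧
            ∀ x ∉ R.frontier, g x = Term.const 0}) ((M+1)^F) hper
      have hLn : ({R : Rule | R ∈ L}).ncard ≤ L.length := by
        rw [← List.coe_toFinset, Set.ncard_coe_finset]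
        exact L.toFinset_card_le
      refine ⟨hU.1.subset hsub, ?_⟩
      calc (ChSet ν L I p).ncard ≤ _ := Set.ncard_le_ncard hsub hU.1
        _ ≤ ({R : Rule | R ∈ L}).ncard * (M+1)^F := hU.2
        _ ≤ L.length * (M+1)^F := Nat.mul_le_mul_right _ hLn
    have hexT : ∀ a ∈ Q, ∃ T, UsedT ν L I T ∧ a ∈ Dset ν T := by
      intro a haQ
      have haS : a ∈ chaseF ν L I k := by rw [hkeq]; exact hQ.2.1 haQ
      rcases atom_trigger ν L I hI k a haS with hconst | h
      · obtain ⟨t, ht, htc⟩ := hcase a haQ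
        exact absurd (hconst t ht) htc
      · exact h
    obtain ⟨a₀, ha₀⟩ := hQ.1
    obtain ⟨T₀, hT₀u, hT₀a⟩ := hexT a₀ ha₀
    have hshare : ∀ T T', UsedT ν L I T → UsedT ν L I T' → ∀ t, ¬ t.isConst →
        t ∈ termsOf (Dset ν T) → t ∈ termsOf (Dset ν T') →
        rootT ν L I T = rootT ν L I T' := by
      intro T T' hTu hT'u t htc ht ht'
      have htS : t ∈ termsOf (chaseF ν L I k) := by
        have h1 : t ∈ termsOf (chaseInf ν L I) := termsOf_mono (Dset_sub_inf ν L I hTu) ht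
        rwa [← hkeq] at h1
      obtain ⟨wT, y, hwu, _, _, heq⟩ := null_origin ν L I hI k t htS htc
      have h1 := owner_root ν L I hL hν hmain k T hTu (hrank_le_k T hTu) t htc ht wT y hwu heq
      have h2 := owner_root ν L I hL hν hmain k T' hT'u (hrank_le_k T' hT'u) t htc ht' wT y hwu heq
      rw [← h1, ← h2]
    have hcomp : ∀ a ∈ Q,
        Relation.ReflTransGen (fun x y => x ∈ chaseInf ν L I ∧ y ∈ chaseInf ν L I ∧
          linked (nullsOf (chaseInf ν L I)) x y) a₀ a := by
      have ha₀S : a₀ ∈ chaseInf ν L I := hQ.2.1 ha₀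
      have hCQ : {b | connectedIn (chaseInf ν L I) (nullsOf (chaseInf ν L I)) a₀ b} ⊆ Q := by
        intro b hb
        obtain ⟨h1, h2, hpath⟩ := hb
        clear h2
        induction hpath with
        | refl => exact ha₀
        | tail hxy hstep ih => exact hQ.2.2.1 _ hstep.2.1 _ ih (linked_symm hstep.2.2)
      have heq2 : {b | connectedIn (chaseInf ν L I) (nullsOf (chaseInf ν L I)) a₀ b} = Q := by
        apply hQ.2.2.2 _ hCQ ⟨a₀, ha₀S, ha₀S, Relation.ReflTransGen.refl⟩
        intro b hbS c hc hlink
        exact ⟨hc.1, hbS, hc.2.2.tail ⟨hc.2.1, hbS, linked_symm hlink⟩⟩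
      intro a haQ
      rw [← heq2] at haQ
      exact haQ.2.2
    have hroot : ∀ a ∈ Q, ∀ T, UsedT ν L I T → a ∈ Dset ν T →
        rootT ν L I T = rootT ν L I T₀ := by
      intro a haQ
      have base : ∀ T, UsedT ν L I T → a₀ ∈ Dset ν T → rootT ν L I T = rootT ν L I T₀ := by
        intro T hTu hTa
        obtain ⟨t, ht, htc⟩ := hcase a₀ ha₀
        exact hshare T T₀ hTu hT₀u t htc (terms_subset hTa ht) (terms_subset hT₀a ht)
      have hpath := hcomp a haQ
      clear haQ
      have hsuff : a ∈ Q ∧ ∀ T, UsedT ν L I T → a ∈ Dset ν T →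
          rootT ν L I T = rootT ν L I T₀ := by
        induction hpath with
        | refl => exact ⟨ha₀, base⟩
        | tail hxy hstep ih =>
          obtain ⟨hxQ, hxprop⟩ := ih
          obtain ⟨hxS, hyS, hlink⟩ := hstep
          have hyQ : _ ∈ Q := hQ.2.2.1 _ hyS _ hxQ (linked_symm hlink)
          obtain ⟨t, htN, htx, hty⟩ := hlink
          obtain ⟨Tx, hTxu, hTxa⟩ := hexT _ hxQ
          refine ⟨hyQ, ?_⟩
          intro T hTu hTa
          have h5 := hshare T Tx hTu hTxu t htN.2 (terms_subset hTa hty) (terms_subset hTxa htx)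
          rw [h5, hxprop Tx hTxu hTxa]
      exact hsuff.2
    have hAi : ∀ i, (AiSet ν L I (rootT ν L I T₀) i).Finite ∧
        (AiSet ν L I (rootT ν L I T₀) i).ncard ≤ (β+1)^(i+1) := by
      intro i
      induction i with
      | zero =>
        have hsub : AiSet ν L I (rootT ν L I T₀) 0 ⊆ {rootT ν L I T₀} := by
          intro T hT
          obtain ⟨hTu, hTr, hTk⟩ := hT
          have hA : AllC T := rank_zero_allC ν L I hI hTu (Nat.le_zero.1 hTk)
          rw [Set.mem_singleton_iff, ← hTr]
          exact (root_fix ν L I hA).symm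
        refine ⟨(Set.finite_singleton _).subset hsub, ?_⟩
        calc _ ≤ _ := Set.ncard_le_ncard hsub (Set.finite_singleton _)
          _ = 1 := Set.ncard_singleton _
          _ ≤ (β+1)^(0+1) := Nat.one_le_pow _ _ (Nat.succ_pos β)
      | succ i ih =>
        have hsub : AiSet ν L I (rootT ν L I T₀) (i+1) ⊆ {rootT ν L I T₀} ∪
            ⋃ p ∈ AiSet ν L I (rootT ν L I T₀) i, ChSet ν L I p := by
          intro T hT
          obtain ⟨hTu, hTr, hTk⟩ := hT
          by_cases hA : AllC T
          · left
            rw [Set.mem_singleton_iff, ← hTr]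
            exact (root_fix ν L I hA).symm
          · right
            have hE := (hmain T hTu).resolve_left hA
            have hspec := parent_spec ν L I hE
            have hproot : rootT ν L I (parentT ν L I T) = rootT ν L I T₀ := by
              rw [← root_eq_parent ν L I hmain hTu hA]
              exact hTr
            have hpmem : parentT ν L I T ∈ AiSet ν L I (rootT ν L I T₀) i :=
              ⟨hspec.1, hproot, by omega⟩
            exact Set.mem_biUnion hpmem ⟨hTu, hA, rfl⟩
        have hbig := ncard_biUnion_le ih.1 (fun p => ChSet ν L I p) β
          (fun p hp => hCh p hp.1)
        have hfin : ({rootT ν L I T₀} ∪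
            ⋃ p ∈ AiSet ν L I (rootT ν L I T₀) i, ChSet ν L I p).Finite :=
          (Set.finite_singleton _).union hbig.1
        refine ⟨hfin.subset hsub, ?_⟩
        have h1e : 1 ≤ (β+1)^(i+1) := Nat.one_le_pow _ _ (Nat.succ_pos β)
        calc _ ≤ _ := Set.ncard_le_ncard hsub hfin
          _ ≤ ({rootT ν L I T₀} : Set (Rule × (ℕ → Term))).ncard +
              (⋃ p ∈ AiSet ν L I (rootT ν L I T₀) i, ChSet ν L I p).ncard :=
            Set.ncard_union_le _ _
          _ ≤ 1 + (AiSet ν L I (rootT ν L I T₀) i).ncard * β := by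
            rw [Set.ncard_singleton]
            exact Nat.add_le_add_left hbig.2 _
          _ ≤ (β+1)^(i+1) + (β+1)^(i+1) * β :=
            Nat.add_le_add h1e (Nat.mul_le_mul_right _ ih.2)
          _ = (β+1)^(i+1+1) := by rw [pow_succ]; ring
    have hQsub : Q ⊆ ⋃ T ∈ AiSet ν L I (rootT ν L I T₀) k, Dset ν T := by
      intro a haQ
      obtain ⟨T, hTu, hTa⟩ := hexT a haQ
      exact Set.mem_biUnion (⟨hTu, hroot a haQ T hTu hTa, hrank_le_k T hTu⟩ :
        T ∈ AiSet ν L I (rootT ν L I T₀) k) hTa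
    have hfinal := ncard_biUnion_le (hAi k).1 (fun T => Dset ν T) H
      (fun T hT => ⟨(hDfin T hT.1).1, (hDfin T hT.1).2.1⟩)
    calc Q.ncard ≤ _ := Set.ncard_le_ncard hQsub hfinal.1
      _ ≤ (AiSet ν L I (rootT ν L I T₀) k).ncard * H := hfinal.2
      _ ≤ (β+1)^(k+1) * H := Nat.mul_le_mul_right _ (hAi k).2
      _ ≤ 1 + (β+1)^(k+1) * H := Nat.le_add_left _ 1

end ER
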